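/- Let A be a commutative ring, N an A-module, P a free A-module of finite rank, and u : N → P an A-linear map. Let I_Z(u) be the ideal of A generated by the elements w(u(x)) for x ∈ N and w ∈ Pˇ = Hom_A(P, A). Then for every commutative A-algebra B, the base-changed map id_B ⊗ u : B ⊗_A N → B ⊗_A P is zero if and only if I_Z(u) is contained in the kernel of the structure map A → B (equivalently, A → B factors through A/I_Z(u)). -/
import Mathlib


/-- Let `A` be a commutative ring, `N` an `A`-module, `P` a free
`A`-module of finite rank and `u : N → P` an `A`-linear map.  Let `I_Z(u)` be the ideal
of `A` generated by the values `w (u x)` for `x ∈ N` and `w ∈ Pˇ`.  Then for every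
commutative `A`-algebra `B`, the base change `id_B ⊗ u : B ⊗ N → B ⊗ P` is zero if and
only if `I_Z(u)` is contained in the kernel of the structure map `A → B`. -/
theorem stmt5 {A N P : Type*} [CommRing A] [AddCommGroup N] [Module A N]
    [AddCommGroup P] [Module A P] [Module.Free A P] [Module.Finite A P]
    (u : N →ₗ[A] P) (B : Type*) [CommRing B] [Algebra A B] :
    LinearMap.baseChange B u = 0 ↔
      Ideal.span {a : A | ∃ (x : N) (w : Module.Dual A P), w (u x) = a} ≤
        RingHom.ker (algebraMap A B) := by
  constructor
  · intro h
    rw [Ideal.span_le]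
    rintro a ⟨x, w, rfl⟩
    have h1 : (LinearMap.baseChange B u) ((1 : B) ⊗ₜ[A] x) = 0 := by rw [h]; rfl
    have h2 : (LinearMap.baseChange B w) ((1 : B) ⊗ₜ[A] (u x)) = 0 := by
      simpa using congrArg (LinearMap.baseChange B w) h1
    have h3 : (1 : B) ⊗ₜ[A] (w (u x)) = (0 : TensorProduct A B A) := by
      simpa using h2
    have h4 := congrArg (TensorProduct.rid A B) h3
    simp only [map_zero, TensorProduct.rid_tmul] at h4
    simpa [RingHom.mem_ker, Algebra.smul_def] using h4
  · intro h
    ext x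
    set b := Module.Free.chooseBasis A P
    have hc : ∀ i, algebraMap A B (b.repr (u x) i) = 0 := fun i =>
      h (Ideal.subset_span ⟨x, b.coord i, rfl⟩)
    have : (1 : B) ⊗ₜ[A] (u x) = (0 : TensorProduct A B P) := by
      conv_lhs => rw [← b.sum_repr (u x)]
      rw [TensorProduct.tmul_sum]
      refine Finset.sum_eq_zero fun i _ => ?_
      rw [TensorProduct.tmul_smul, ← algebraMap_smul B (b.repr (u x) i), hc, zero_smul]
    simpa using this
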